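/- Let A, Q, C be n×n real matrices and fix s ≥ 0. For τ > 0 small enough that I − τA is invertible, set B(τ) := (I − τA)⁻¹ and K_c(s; τ) := exp(sA)·C + exp(sA)·(∫_{u=0}^{s} e^{−u/τ}·exp(−uA) du)·Q·B(τ)ᵀ. Then K_c(s; τ) tends to exp(sA)·C as τ → 0⁺; i.e., in the memoryless limit the colored-noise correlation function converges to the white-noise correlation function K_w(s) = exp(sA)·C. -/

import Mathlib

open Matrix NormedSpace
open scoped Matrix.Norms.L2Operator

/-- The elementary integral `∫_0^s e^{-u/τ} du = τ (1 - e^{-s/τ})`. -/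
lemma integral_exp_neg_div (τ s : ℝ) (hτ : 0 < τ) :
    ∫ u in (0:ℝ)..s, Real.exp (-u/τ) = τ * (1 - Real.exp (-(s/τ))) := by
  have h1 : ∀ u : ℝ, -u/τ = -(u/τ) := fun u => by ring
  simp only [h1]
  rw [intervalIntegral.integral_comp_div (f := fun x => Real.exp (-x)) hτ.ne']
  simp [mul_comm]

/-- In the memoryless limit `τ → 0⁺`, the colored-noise correlation function
`K_c(s; τ) = exp(sA)·C + exp(sA)·(∫_0^s e^{−u/τ} exp(−uA) du)·Q·B(τ)ᵀ`, with
`B(τ) = (1 − τA)⁻¹`, converges to the white-noise correlation function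
`K_w(s) = exp(sA)·C`. -/
theorem coloredCorrelation_tendsto_whiteCorrelation
    (n : ℕ) (A Q C : Matrix (Fin n) (Fin n) ℝ) (s : ℝ) (hs : 0 ≤ s) :
    Filter.Tendsto (fun τ : ℝ =>
        exp (s • A) * C +
          exp (s • A) * (∫ u in (0:ℝ)..s, Real.exp (-u/τ) • exp ((-u) • A)) * Q *
            ((1 - τ • A)⁻¹)ᵀ)
      (nhdsWithin 0 (Set.Ioi 0)) (nhds (exp (s • A) * C)) := by
  -- Continuity of u ↦ exp(-u • A)
  have hcont : Continuous (fun u : ℝ => exp ((-u) • A)) :=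
    (letI := NormedAlgebra.restrictScalars ℚ ℝ (Matrix (Fin n) (Fin n) ℝ); exp_continuous).comp (by continuity)
  -- A uniform bound on exp(-u • A) on [0, s]
  obtain ⟨M, hM⟩ := isCompact_Icc.exists_bound_of_continuousOn
    (s := Set.Icc (0:ℝ) s) hcont.continuousOn
  have hM0 : 0 ≤ M := le_trans (norm_nonneg _) (hM 0 ⟨le_refl _, hs⟩)
  -- the integral tends to 0
  have h1 : Filter.Tendsto
      (fun τ : ℝ => ∫ u in (0:ℝ)..s, Real.exp (-u/τ) • exp ((-u) • A))
      (nhdsWithin 0 (Set.Ioi 0)) (nhds 0) := by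
    have htend : Filter.Tendsto (fun τ : ℝ => M * τ) (nhdsWithin 0 (Set.Ioi 0)) (nhds 0) := by
      have : Filter.Tendsto (fun τ : ℝ => M * τ) (nhds 0) (nhds (M * 0)) :=
        (continuous_const.mul continuous_id).tendsto 0
      simpa using this.mono_left nhdsWithin_le_nhds
    refine squeeze_zero_norm' ?_ htend
    filter_upwards [self_mem_nhdsWithin] with τ hτ
    have hτ0 : (0:ℝ) < τ := hτ
    have hint1 : IntervalIntegrable
        (fun u => ‖Real.exp (-u/τ) • exp ((-u) • A)‖) MeasureTheory.volume 0 s :=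
      (Continuous.norm (by fun_prop)).intervalIntegrable _ _
    have hint2 : IntervalIntegrable (fun u => Real.exp (-u/τ) * M)
        MeasureTheory.volume 0 s := (by fun_prop : Continuous _).intervalIntegrable _ _
    have hexp : Real.exp (-(s/τ)) ≤ 1 := by
      apply Real.exp_le_one_iff.mpr
      exact neg_nonpos.mpr (div_nonneg hs hτ0.le)
    calc ‖∫ u in (0:ℝ)..s, Real.exp (-u/τ) • exp ((-u) • A)‖
        ≤ ∫ u in (0:ℝ)..s, ‖Real.exp (-u/τ) • exp ((-u) • A)‖ :=
          intervalIntegral.norm_integral_le_integral_norm hs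
      _ ≤ ∫ u in (0:ℝ)..s, Real.exp (-u/τ) * M := by
          apply intervalIntegral.integral_mono_on hs hint1 hint2
          intro u hu
          rw [norm_smul, Real.norm_eq_abs, abs_of_pos (Real.exp_pos _)]
          exact mul_le_mul_of_nonneg_left (hM u hu) (Real.exp_pos _).le
      _ = (∫ u in (0:ℝ)..s, Real.exp (-u/τ)) * M :=
          intervalIntegral.integral_mul_const _ _
      _ = (τ * (1 - Real.exp (-(s/τ)))) * M := by
          rw [integral_exp_neg_div τ s hτ0]
      _ ≤ τ * M := by
          apply mul_le_mul_of_nonneg_right ?_ hM0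
          nlinarith [Real.exp_pos (-(s/τ))]
      _ = M * τ := mul_comm _ _
  -- B(τ)ᵀ tends to 1
  have h2 : Filter.Tendsto (fun τ : ℝ => ((1 - τ • A)⁻¹)ᵀ)
      (nhdsWithin 0 (Set.Ioi 0)) (nhds 1) := by
    have hca : ContinuousAt (fun τ : ℝ => ((1 - τ • A)⁻¹)ᵀ) 0 := by
      have hf : ContinuousAt (fun τ : ℝ => 1 - τ • A) 0 := by fun_prop
      have hinv : ContinuousAt Inv.inv ((1:Matrix (Fin n) (Fin n) ℝ) - (0:ℝ) • A) := by
        apply continuousAt_matrix_inv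
        have h : ((1:Matrix (Fin n) (Fin n) ℝ) - (0:ℝ) • A).det = 1 := by simp
        rw [h]
        exact NormedRing.inverse_continuousAt 1
      have hcomp : ContinuousAt (fun τ : ℝ => (1 - τ • A)⁻¹) 0 :=
        ContinuousAt.comp (g := Inv.inv) (f := fun τ : ℝ => 1 - τ • A) (by simpa using hinv) hf
      exact ((continuous_id.matrix_transpose).continuousAt).comp hcomp
    have h0 : (((1 : Matrix (Fin n) (Fin n) ℝ) - (0:ℝ) • A)⁻¹)ᵀ = 1 := by simp
    have := hca.tendsto.mono_left (nhdsWithin_le_nhds (s := Set.Ioi (0:ℝ)))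
    simpa [h0] using this
  have hprod := ((Filter.Tendsto.mul (tendsto_const_nhds (x := exp (s • A))) h1).mul
    (tendsto_const_nhds (x := Q))).mul h2
  simpa using (tendsto_const_nhds (x := exp (s • A) * C)).add hprod
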